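/- Let g₀ : ℝ → ℝ be 2π-periodic with |g₀(θ)| ≤ α²/(|θ| ∨ α) for |θ| ≤ π, where α = Cδ ≤ π. Then (1/2π)∫₀^{2π} g₀(θ)² dθ ≤ C'δ³ for an absolute constant C' depending only on C, and for a ∈ [δ, π], (1/2π)∫₀^{2π} |g₀(θ)g₀(θ+a)| dθ ≤ C'(δ⁴/a)·log(1/δ). -/

import Mathlib

open intervalIntegral Real MeasureTheory
set_option maxHeartbeats 1000000

open intervalIntegral Real MeasureTheory
set_option maxHeartbeats 1000000

lemma aux_round_bound (x : ℝ) :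
    |x - (round (x / (2*Real.pi)) : ℤ) * (2*Real.pi)| ≤ Real.pi := by
  have h2pi : (0:ℝ) < 2*Real.pi := by positivity
  have h := abs_sub_round (x / (2*Real.pi))
  have hx : x - (round (x / (2*Real.pi)) : ℤ) * (2*Real.pi)
      = (x / (2*Real.pi) - (round (x / (2*Real.pi)) : ℤ)) * (2*Real.pi) := by
    field_simp
  rw [hx, abs_mul, abs_of_pos h2pi]
  calc |x / (2*Real.pi) - (round (x / (2*Real.pi)) : ℤ)| * (2*Real.pi)
      ≤ (1/2) * (2*Real.pi) := by
        exact mul_le_mul_of_nonneg_right h (le_of_lt h2pi)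
    _ = Real.pi := by ring

lemma aux_abs_int_ge (a : ℝ) (ha : 0 < a) (haπ : a ≤ Real.pi) (k : ℤ) :
    a ≤ |a - k * (2*Real.pi)| := by
  rcases le_or_gt (k:ℝ) 0 with hk | hk
  · have : a ≤ a - k * (2*Real.pi) := by nlinarith [Real.pi_pos]
    calc a ≤ a - k * (2*Real.pi) := this
      _ ≤ |a - k * (2*Real.pi)| := le_abs_self _
  · have hk1 : (1:ℝ) ≤ (k:ℝ) := by exact_mod_cast hk
    have : a ≤ -(a - k * (2*Real.pi)) := by nlinarith [Real.pi_pos]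
    calc a ≤ -(a - k * (2*Real.pi)) := this
      _ ≤ |a - k * (2*Real.pi)| := neg_le_abs _

lemma aux_rsum (a θ : ℝ) (ha : 0 < a) (haπ : a ≤ Real.pi) :
    a ≤ |θ - (round (θ/(2*Real.pi)) : ℤ) * (2*Real.pi)|
      + |(θ+a) - (round ((θ+a)/(2*Real.pi)) : ℤ) * (2*Real.pi)| := by
  set m : ℤ := round (θ/(2*Real.pi))
  set n : ℤ := round ((θ+a)/(2*Real.pi))
  set u : ℝ := θ - m * (2*Real.pi)
  set v : ℝ := (θ+a) - n * (2*Real.pi)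
  have hvu : v - u = a - (n - m) * (2*Real.pi) := by
    simp only [u, v]; push_cast; ring
  calc a ≤ |a - (n - m) * (2*Real.pi)| := by have := aux_abs_int_ge a ha haπ (n - m); convert this using 3; push_cast; ring
    _ = |v - u| := by rw [hvu]
    _ ≤ |v| + |u| := abs_sub _ _
    _ = |u| + |v| := by ring

open intervalIntegral Real MeasureTheory
set_option maxHeartbeats 1000000

lemma aux_contF (α : ℝ) (hα : 0 < α) : Continuous (fun θ : ℝ => α^2 / max |θ| α) := by
  apply Continuous.div continuous_const (continuous_abs.max continuous_const)
  intro x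
  exact ne_of_gt (lt_of_lt_of_le hα (le_max_right _ _))

lemma aux_zero_notin (α : ℝ) (hα : 0 < α) (hαπ : α ≤ Real.pi) :
    (0:ℝ) ∉ Set.uIcc α Real.pi := by
  rw [Set.uIcc_of_le hαπ]
  intro h
  exact absurd h.1 (not_le.mpr hα)

-- evenness reduction
lemma aux_even_int (f : ℝ → ℝ) (hf : ∀ x, f (-x) = f x)
    (hint : ∀ a b : ℝ, IntervalIntegrable f volume a b) :
    ∫ θ in (-Real.pi)..Real.pi, f θ = 2 * ∫ θ in (0:ℝ)..Real.pi, f θ := by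
  have h1 : ∫ θ in (-Real.pi)..(0:ℝ), f θ = ∫ θ in (0:ℝ)..Real.pi, f θ := by
    have := intervalIntegral.integral_comp_neg (a := (0:ℝ)) (b := Real.pi) (f := f)
    rw [neg_zero] at this
    rw [← this]
    exact intervalIntegral.integral_congr (fun x _ => hf x)
  rw [← intervalIntegral.integral_add_adjacent_intervals (hint (-Real.pi) 0) (hint 0 Real.pi),
    h1]
  ring

lemma aux_int_F_sq (α : ℝ) (hα : 0 < α) (hαπ : α ≤ Real.pi) :
    ∫ θ in (-Real.pi)..Real.pi, (α^2 / max |θ| α)^2 ≤ 4*α^3 := by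
  have hc : Continuous (fun θ : ℝ => (α^2 / max |θ| α)^2) := (aux_contF α hα).pow 2
  have hint : ∀ a b : ℝ, IntervalIntegrable (fun θ : ℝ => (α^2 / max |θ| α)^2) volume a b :=
    fun a b => hc.intervalIntegrable a b
  rw [aux_even_int _ (by intro x; rw [abs_neg]) hint]
  have h1 : ∫ θ in (0:ℝ)..α, (α^2 / max |θ| α)^2 ≤ α^3 := by
    calc ∫ θ in (0:ℝ)..α, (α^2 / max |θ| α)^2 ≤ ∫ _ in (0:ℝ)..α, α^2 := by
          apply intervalIntegral.integral_mono_on (le_of_lt hα) (hint 0 α)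
            intervalIntegrable_const
          intro x hx
          have hle : α^2 / max |x| α ≤ α := by
            rw [div_le_iff₀ (lt_of_lt_of_le hα (le_max_right _ _))]
            nlinarith [le_max_right |x| α, abs_nonneg x, lt_of_lt_of_le hα (le_max_right |x| α)]
          have h0 : 0 ≤ α^2 / max |x| α := by positivity
          nlinarith
      _ = α^3 := by rw [intervalIntegral.integral_const]; simp; ring
  have h2 : ∫ θ in α..Real.pi, (α^2 / max |θ| α)^2 ≤ α^3 := by
    have key : ∫ θ in α..Real.pi, (α^2 / max |θ| α)^2 = ∫ θ in α..Real.pi, α^4 * θ^(-2:ℤ) := by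
      apply intervalIntegral.integral_congr
      intro x hx
      rw [Set.uIcc_of_le hαπ] at hx
      have hx0 : 0 < x := lt_of_lt_of_le hα hx.1
      simp only []
      rw [abs_of_pos hx0, max_eq_left hx.1]
      rw [div_pow]
      rw [zpow_neg, zpow_two]
      field_simp
    rw [key, intervalIntegral.integral_const_mul,
      integral_zpow (Or.inr ⟨by norm_num, aux_zero_notin α hα hαπ⟩)]
    have hπ : 0 < Real.pi := Real.pi_pos
    have : ((-2:ℤ) + 1 : ℝ) = -1 := by norm_num
    rw [show ((-2:ℤ) + 1) = (-1 : ℤ) by norm_num]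
    simp only [zpow_neg_one]
    have hineq : (Real.pi⁻¹ - α⁻¹) / ((-2:ℤ) + 1 : ℝ) ≤ α⁻¹ := by
      norm_num
      have : 0 < Real.pi⁻¹ := by positivity
      linarith
    calc α^4 * ((Real.pi⁻¹ - α⁻¹) / ((-2:ℤ) + 1 : ℝ)) ≤ α^4 * α⁻¹ := by
          apply mul_le_mul_of_nonneg_left hineq (by positivity)
      _ = α^3 := by field_simp
  have hsplit : ∫ θ in (0:ℝ)..Real.pi, (α^2 / max |θ| α)^2
      = (∫ θ in (0:ℝ)..α, (α^2 / max |θ| α)^2) + ∫ θ in α..Real.pi, (α^2 / max |θ| α)^2 := by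
    rw [intervalIntegral.integral_add_adjacent_intervals (hint 0 α) (hint α Real.pi)]
  rw [hsplit]
  linarith

lemma aux_int_F (α : ℝ) (hα : 0 < α) (hαπ : α ≤ Real.pi) :
    ∫ θ in (-Real.pi)..Real.pi, α^2 / max |θ| α ≤ 2*α^2*(1 + Real.log (Real.pi/α)) := by
  have hint : ∀ a b : ℝ, IntervalIntegrable (fun θ : ℝ => α^2 / max |θ| α) volume a b :=
    fun a b => (aux_contF α hα).intervalIntegrable a b
  rw [aux_even_int _ (by intro x; rw [abs_neg]) hint]
  have h1 : ∫ θ in (0:ℝ)..α, α^2 / max |θ| α ≤ α^2 := by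
    calc ∫ θ in (0:ℝ)..α, α^2 / max |θ| α ≤ ∫ _ in (0:ℝ)..α, α := by
          apply intervalIntegral.integral_mono_on (le_of_lt hα) (hint 0 α)
            intervalIntegrable_const
          intro x hx
          rw [div_le_iff₀ (lt_of_lt_of_le hα (le_max_right _ _))]
          nlinarith [le_max_right |x| α, lt_of_lt_of_le hα (le_max_right |x| α)]
      _ = α^2 := by rw [intervalIntegral.integral_const]; simp; ring
  have h2 : ∫ θ in α..Real.pi, α^2 / max |θ| α ≤ α^2 * Real.log (Real.pi/α) := by
    have key : ∫ θ in α..Real.pi, α^2 / max |θ| α = ∫ θ in α..Real.pi, α^2 * (1/θ) := by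
      apply intervalIntegral.integral_congr
      intro x hx
      rw [Set.uIcc_of_le hαπ] at hx
      have hx0 : 0 < x := lt_of_lt_of_le hα hx.1
      simp only []
      rw [abs_of_pos hx0, max_eq_left hx.1]
      ring
    rw [key, intervalIntegral.integral_const_mul, integral_one_div (aux_zero_notin α hα hαπ)]
  have hsplit : ∫ θ in (0:ℝ)..Real.pi, α^2 / max |θ| α
      = (∫ θ in (0:ℝ)..α, α^2 / max |θ| α) + ∫ θ in α..Real.pi, α^2 / max |θ| α := by
    rw [intervalIntegral.integral_add_adjacent_intervals (hint 0 α) (hint α Real.pi)]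
  rw [hsplit]
  nlinarith [h1, h2]


theorem stmt7 (C : ℝ) (hC : 0 < C) : ∃ C' : ℝ, 0 < C' ∧
    ∀ (δ : ℝ), δ ∈ Set.Ioc (0:ℝ) (1/3) →
    ∀ (g₀ : ℝ → ℝ), Measurable g₀ →
    (∀ θ : ℝ, g₀ (θ + 2 * Real.pi) = g₀ θ) →
    C * δ ≤ Real.pi →
    (∀ θ : ℝ, |θ| ≤ Real.pi → |g₀ θ| ≤ (C * δ)^2 / (max |θ| (C * δ))) →
    (1 / (2 * Real.pi)) * (∫ θ in (0:ℝ)..(2 * Real.pi), (g₀ θ)^2) ≤ C' * δ^3 ∧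
    ∀ a ∈ Set.Icc δ Real.pi,
      (1 / (2 * Real.pi)) * (∫ θ in (0:ℝ)..(2 * Real.pi), |g₀ θ * g₀ (θ + a)|) ≤
        C' * (δ^4 / a) * Real.log (1 / δ) := by
  have hπ : 0 < Real.pi := Real.pi_pos
  set M : ℝ := max 0 (Real.log Real.pi - Real.log C) + 2 with hMdef
  have hmax0 : 0 ≤ max 0 (Real.log Real.pi - Real.log C) := le_max_left _ _
  have hM2 : 2 ≤ M := by simp only [hMdef]; linarith
  have hterm1 : 0 < 2/Real.pi * C^3 := by positivity
  have hterm2 : 0 ≤ 4/Real.pi * C^4 * M := by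
    apply mul_nonneg (by positivity); linarith
  refine ⟨2/Real.pi * C^3 + 4/Real.pi * C^4 * M + 1, by linarith, ?_⟩
  intro δ hδ g₀ hmeas hper hαπ hg
  obtain ⟨hδ0, hδ13⟩ := hδ
  set α := C * δ with hαdef
  have hα0 : 0 < α := mul_pos hC hδ0
  have hper' : Function.Periodic g₀ (2*Real.pi) := hper
  -- bound at arbitrary points via periodicity
  have hrep : ∀ x : ℝ, |g₀ x| ≤ α^2 / max (|x - (round (x/(2*Real.pi)) : ℤ) * (2*Real.pi)|) α := by
    intro x
    have h1 : g₀ (x - (round (x/(2*Real.pi)) : ℤ) * (2*Real.pi)) = g₀ x :=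
      hper'.sub_int_mul_eq (round (x/(2*Real.pi)))
    rw [← h1]
    exact hg _ (aux_round_bound x)
  have hbd : ∀ x, |g₀ x| ≤ α := by
    intro x
    refine (hrep x).trans ?_
    rw [div_le_iff₀ (lt_of_lt_of_le hα0 (le_max_right _ _))]
    nlinarith [le_max_right (|x - (round (x/(2*Real.pi)) : ℤ) * (2*Real.pi)|) α]
  -- integrability
  have hint_sq : ∀ u v : ℝ, IntervalIntegrable (fun θ => (g₀ θ)^2) volume u v := by
    intro u v
    refine (_root_.intervalIntegrable_const (c := α^2)).mono_fun
      ((hmeas.pow_const 2).aestronglyMeasurable) (MeasureTheory.ae_of_all _ fun x => ?_)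
    simp only [Real.norm_eq_abs]
    have h1 := hbd x
    have h2 := abs_nonneg (g₀ x)
    rw [abs_of_nonneg (sq_nonneg (g₀ x)), abs_of_nonneg (sq_nonneg α)]
    nlinarith [sq_abs (g₀ x)]
  have hint_abs : ∀ u v : ℝ, IntervalIntegrable (fun θ => |g₀ θ|) volume u v := by
    intro u v
    refine (_root_.intervalIntegrable_const (c := α)).mono_fun
      (hmeas.abs.aestronglyMeasurable) (MeasureTheory.ae_of_all _ fun x => ?_)
    simp only [Real.norm_eq_abs, abs_abs, abs_of_pos hα0]
    exact hbd x
  constructor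
  · -- first bound
    have hpersq : Function.Periodic (fun θ => (g₀ θ)^2) (2*Real.pi) := fun x => by
      simp [hper x]
    have hshift1 : ∫ θ in (0:ℝ)..(2*Real.pi), (g₀ θ)^2
        = ∫ θ in (-Real.pi)..Real.pi, (g₀ θ)^2 := by
      have h := hpersq.intervalIntegral_add_eq 0 (-Real.pi)
      rw [zero_add, show -Real.pi + 2*Real.pi = Real.pi by ring] at h
      exact h
    have hmono1 : ∫ θ in (-Real.pi)..Real.pi, (g₀ θ)^2
        ≤ ∫ θ in (-Real.pi)..Real.pi, (α^2 / max |θ| α)^2 := by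
      apply intervalIntegral.integral_mono_on (by linarith) (hint_sq _ _)
        (((aux_contF α hα0).pow 2).intervalIntegrable _ _)
      intro x hx
      have h := hg x (abs_le.mpr ⟨hx.1, hx.2⟩)
      have h0 : 0 ≤ α^2 / max |x| α := by positivity
      show g₀ x ^ 2 ≤ (α^2 / max |x| α)^2
      nlinarith [abs_nonneg (g₀ x), sq_abs (g₀ x)]
    have hkey : ∫ θ in (0:ℝ)..(2*Real.pi), (g₀ θ)^2 ≤ 4*α^3 := by
      rw [hshift1]; exact hmono1.trans (aux_int_F_sq α hα0 hαπ)
    calc (1 / (2 * Real.pi)) * ∫ θ in (0:ℝ)..(2 * Real.pi), (g₀ θ)^2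
        ≤ (1 / (2 * Real.pi)) * (4*α^3) := by
          apply mul_le_mul_of_nonneg_left hkey (by positivity)
      _ = (2/Real.pi * C^3) * δ^3 := by rw [hαdef]; field_simp; ring
      _ ≤ (2/Real.pi * C^3 + 4/Real.pi * C^4 * M + 1) * δ^3 := by
          apply mul_le_mul_of_nonneg_right (by linarith) (by positivity)
  · -- second bound
    intro a ha
    obtain ⟨haδ, haπ⟩ := ha
    have ha0 : 0 < a := lt_of_lt_of_le hδ0 haδ
    have hint_shift : ∀ u v : ℝ, IntervalIntegrable (fun θ => |g₀ (θ + a)|) volume u v := by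
      intro u v
      refine (_root_.intervalIntegrable_const (c := α)).mono_fun
        (((hmeas.comp (measurable_id.add_const a)).abs).aestronglyMeasurable)
        (MeasureTheory.ae_of_all _ fun x => ?_)
      simp only [Real.norm_eq_abs, abs_abs, abs_of_pos hα0]
      exact hbd _
    have hint_prod : ∀ u v : ℝ, IntervalIntegrable (fun θ => |g₀ θ * g₀ (θ + a)|) volume u v := by
      intro u v
      refine (_root_.intervalIntegrable_const (c := α^2)).mono_fun
        (((hmeas.mul (hmeas.comp (measurable_id.add_const a))).abs).aestronglyMeasurable)
        (MeasureTheory.ae_of_all _ fun x => ?_)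
      simp only [Real.norm_eq_abs, abs_abs, abs_of_pos (by positivity : (0:ℝ) < α^2),
        abs_mul]
      have h1 := hbd x; have h2 := hbd (x + a)
      nlinarith [abs_nonneg (g₀ x), abs_nonneg (g₀ (x + a))]
    -- pointwise bound
    have hpt : ∀ θ : ℝ, |g₀ θ * g₀ (θ + a)| ≤ 2*α^2/a * (|g₀ θ| + |g₀ (θ + a)|) := by
      intro θ
      have hsum := aux_rsum a θ ha0 haπ
      set r1 := |θ - (round (θ/(2*Real.pi)) : ℤ) * (2*Real.pi)| with hr1
      set r2 := |(θ+a) - (round ((θ+a)/(2*Real.pi)) : ℤ) * (2*Real.pi)| with hr2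
      rcases le_total r1 r2 with hcase | hcase
      · have h2 : a/2 ≤ r2 := by linarith
        have hb2 : |g₀ (θ + a)| ≤ 2*α^2/a := by
          refine (hrep (θ + a)).trans ?_
          rw [div_le_div_iff₀ (lt_of_lt_of_le hα0 (le_max_right _ _)) ha0]
          nlinarith [le_trans h2 (le_max_left r2 α), sq_nonneg α]
        rw [abs_mul]
        calc |g₀ θ| * |g₀ (θ + a)| ≤ |g₀ θ| * (2*α^2/a) :=
              mul_le_mul_of_nonneg_left hb2 (abs_nonneg _)
          _ = 2*α^2/a * |g₀ θ| := by ring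
          _ ≤ 2*α^2/a * (|g₀ θ| + |g₀ (θ + a)|) := by
              apply mul_le_mul_of_nonneg_left _ (by positivity)
              linarith [abs_nonneg (g₀ (θ + a))]
      · have h1 : a/2 ≤ r1 := by linarith
        have hb1 : |g₀ θ| ≤ 2*α^2/a := by
          refine (hrep θ).trans ?_
          rw [div_le_div_iff₀ (lt_of_lt_of_le hα0 (le_max_right _ _)) ha0]
          nlinarith [le_trans h1 (le_max_left r1 α), sq_nonneg α]
        rw [abs_mul]
        calc |g₀ θ| * |g₀ (θ + a)| ≤ (2*α^2/a) * |g₀ (θ + a)| :=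
              mul_le_mul_of_nonneg_right hb1 (abs_nonneg _)
          _ ≤ 2*α^2/a * (|g₀ θ| + |g₀ (θ + a)|) := by
              apply mul_le_mul_of_nonneg_left _ (by positivity)
              linarith [abs_nonneg (g₀ θ)]
    have hperabs : Function.Periodic (fun θ => |g₀ θ|) (2*Real.pi) := fun x => by
      simp [hper x]
    have hshift2 : ∫ θ in (0:ℝ)..(2*Real.pi), |g₀ (θ + a)|
        = ∫ θ in (0:ℝ)..(2*Real.pi), |g₀ θ| := by
      rw [intervalIntegral.integral_comp_add_right (fun θ => |g₀ θ|) a]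
      have h := hperabs.intervalIntegral_add_eq a 0
      rw [zero_add] at h
      rw [show (0:ℝ) + a = a by ring, show 2*Real.pi + a = a + 2*Real.pi by ring]
      exact h
    have habs_bound : ∫ θ in (0:ℝ)..(2*Real.pi), |g₀ θ| ≤ 2*α^2*(1 + Real.log (Real.pi/α)) := by
      have hs : ∫ θ in (0:ℝ)..(2*Real.pi), |g₀ θ| = ∫ θ in (-Real.pi)..Real.pi, |g₀ θ| := by
        have h := hperabs.intervalIntegral_add_eq 0 (-Real.pi)
        rw [zero_add, show -Real.pi + 2*Real.pi = Real.pi by ring] at h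
        exact h
      rw [hs]
      refine le_trans ?_ (aux_int_F α hα0 hαπ)
      apply intervalIntegral.integral_mono_on (by linarith) (hint_abs _ _)
        ((aux_contF α hα0).intervalIntegrable _ _)
      intro x hx
      exact hg x (abs_le.mpr ⟨hx.1, hx.2⟩)
    have hchain : ∫ θ in (0:ℝ)..(2*Real.pi), |g₀ θ * g₀ (θ + a)|
        ≤ 2*α^2/a * (2 * (2*α^2*(1 + Real.log (Real.pi/α)))) := by
      calc ∫ θ in (0:ℝ)..(2*Real.pi), |g₀ θ * g₀ (θ + a)|
          ≤ ∫ θ in (0:ℝ)..(2*Real.pi), 2*α^2/a * (|g₀ θ| + |g₀ (θ + a)|) := by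
            apply intervalIntegral.integral_mono_on (by linarith) (hint_prod _ _)
              (((hint_abs _ _).add (hint_shift _ _)).const_mul _) (fun x _ => hpt x)
        _ = 2*α^2/a * ((∫ θ in (0:ℝ)..(2*Real.pi), |g₀ θ|)
              + ∫ θ in (0:ℝ)..(2*Real.pi), |g₀ (θ + a)|) := by
            rw [intervalIntegral.integral_const_mul,
              intervalIntegral.integral_add (hint_abs _ _) (hint_shift _ _)]
        _ = 2*α^2/a * (2 * ∫ θ in (0:ℝ)..(2*Real.pi), |g₀ θ|) := by rw [hshift2]; ring
        _ ≤ 2*α^2/a * (2 * (2*α^2*(1 + Real.log (Real.pi/α)))) := by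
            apply mul_le_mul_of_nonneg_left _ (by positivity)
            apply mul_le_mul_of_nonneg_left habs_bound (by norm_num)
    -- logarithm estimates
    have hL : 1 < Real.log (1/δ) := by
      have h3 : (3:ℝ) ≤ 1/δ := by rw [le_div_iff₀ hδ0]; linarith
      have he3 : Real.exp 1 < 3 := by
        have := Real.exp_one_lt_d9; linarith
      calc (1:ℝ) = Real.log (Real.exp 1) := (Real.log_exp 1).symm
        _ < Real.log 3 := Real.log_lt_log (Real.exp_pos 1) he3
        _ ≤ Real.log (1/δ) := Real.log_le_log (by norm_num) h3
    have hlog : 1 + Real.log (Real.pi/α) ≤ M * Real.log (1/δ) := by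
      have hlogπα : Real.log (Real.pi/α)
          = Real.log Real.pi - Real.log C + Real.log (1/δ) := by
        rw [Real.log_div (ne_of_gt hπ) (ne_of_gt hα0), hαdef,
          Real.log_mul (ne_of_gt hC) (ne_of_gt hδ0),
          Real.log_div one_ne_zero (ne_of_gt hδ0), Real.log_one]
        ring
      rw [hlogπα, hMdef]
      nlinarith [hL, le_max_right 0 (Real.log Real.pi - Real.log C), hmax0]
    have hlogpos : (0:ℝ) ≤ 1 + Real.log (Real.pi/α) := by
      have : 0 ≤ Real.log (Real.pi/α) :=
        Real.log_nonneg (by rw [le_div_iff₀ hα0]; linarith)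
      linarith
    calc (1 / (2 * Real.pi)) * ∫ θ in (0:ℝ)..(2 * Real.pi), |g₀ θ * g₀ (θ + a)|
        ≤ (1 / (2 * Real.pi)) * (2*α^2/a * (2 * (2*α^2*(1 + Real.log (Real.pi/α))))) := by
          apply mul_le_mul_of_nonneg_left hchain (by positivity)
      _ = (4/Real.pi * C^4) * (δ^4/a) * (1 + Real.log (Real.pi/α)) := by
          have hπ' : Real.pi ≠ 0 := ne_of_gt hπ
          have ha' : a ≠ 0 := ne_of_gt ha0
          rw [hαdef]
          generalize (1 + Real.log (Real.pi/(C*δ))) = X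
          field_simp
          ring
      _ ≤ (4/Real.pi * C^4) * (δ^4/a) * (M * Real.log (1/δ)) := by
          apply mul_le_mul_of_nonneg_left hlog (by positivity)
      _ = (4/Real.pi * C^4 * M) * ((δ^4/a) * Real.log (1/δ)) := by ring
      _ ≤ (2/Real.pi * C^3 + 4/Real.pi * C^4 * M + 1) * ((δ^4/a) * Real.log (1/δ)) := by
          apply mul_le_mul_of_nonneg_right (by linarith)
          apply mul_nonneg (by positivity) (by linarith)
      _ = (2/Real.pi * C^3 + 4/Real.pi * C^4 * M + 1) * (δ^4/a) * Real.log (1/δ) := by ring
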